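/- Let m, d ≥ 1, let L_i(x) = c_i + ⟨ℓ_i, x⟩ (i = 1,…,d) be affine linear functions on ℝ^m, and let Δ = {x ∈ ℝ^m : L_i(x) ≥ 0 for all i}. Let f(x) = a₀ + ⟨a,x⟩ with a₀ > 0 be strictly positive on Δ, and define the f-twist transforms L̃_i(y) = c_i/a₀ + ⟨ℓ_i − (c_i/a₀)·a, y⟩ and f̃(y) = (1/a₀)(1 − ⟨a,y⟩). Then the image of Δ under the f-twist map T(x) = x/f(x) equals {y ∈ ℝ^m : f̃(y) > 0 and L̃_i(y) ≥ 0 for all i = 1,…,d}. -/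

import Mathlib

/-- The image under the f-twist map T(x) = x/f(x) of the polytope
Δ = {x : Lᵢ(x) ≥ 0 ∀i} (on which f > 0) is the set {y : f̃(y) > 0 and L̃ᵢ(y) ≥ 0 ∀i},
where L̃ᵢ and f̃ are the f-twist transforms of the labels Lᵢ and of f. -/
theorem stmt1 (m d : ℕ) (hm : 1 ≤ m) (hd : 1 ≤ d)
    (c : Fin d → ℝ) (ℓ : Fin d → Fin m → ℝ)
    (L : Fin d → (Fin m → ℝ) → ℝ)
    (hL : ∀ i x, L i x = c i + ∑ j, ℓ i j * x j)
    (Δ : Set (Fin m → ℝ)) (hΔ : Δ = {x | ∀ i, 0 ≤ L i x})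
    (a₀ : ℝ) (ha₀ : 0 < a₀) (a : Fin m → ℝ)
    (f : (Fin m → ℝ) → ℝ) (hf : ∀ x, f x = a₀ + ∑ j, a j * x j)
    (hfΔ : ∀ x ∈ Δ, 0 < f x)
    (T : (Fin m → ℝ) → (Fin m → ℝ)) (hT : ∀ x, T x = (f x)⁻¹ • x)
    (Ltil : Fin d → (Fin m → ℝ) → ℝ)
    (hLtil : ∀ i y, Ltil i y = c i / a₀ + ∑ j, (ℓ i j - (c i / a₀) * a j) * y j)
    (ftil : (Fin m → ℝ) → ℝ)
    (hftil : ∀ y, ftil y = (1 / a₀) * (1 - ∑ j, a j * y j)) :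
    T '' Δ = {y | 0 < ftil y ∧ ∀ i, 0 ≤ Ltil i y} := by
  have ha₀' : a₀ ≠ 0 := ne_of_gt ha₀
  have smulsum : ∀ (b y : Fin m → ℝ) (t : ℝ),
      (∑ j, b j * (t • y) j) = t * ∑ j, b j * y j := by
    intro b y t
    rw [Finset.mul_sum]
    exact Finset.sum_congr rfl fun j _ => by simp [smul_eq_mul]; ring
  have expand : ∀ i (y : Fin m → ℝ),
      (∑ j, (ℓ i j - (c i / a₀) * a j) * y j)
        = (∑ j, ℓ i j * y j) - (c i / a₀) * ∑ j, a j * y j := by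
    intro i y
    rw [Finset.mul_sum, ← Finset.sum_sub_distrib]
    exact Finset.sum_congr rfl fun j _ => by ring
  ext y
  constructor
  · rintro ⟨x, hx, rfl⟩
    have hF : 0 < f x := hfΔ x hx
    have hF' : f x ≠ 0 := ne_of_gt hF
    have hSx : (∑ j, a j * x j) = f x - a₀ := by rw [hf]; ring
    have hftilT : ftil (T x) = (f x)⁻¹ := by
      rw [hftil, hT, smulsum, hSx]
      field_simp
      ring
    have hLtilT : ∀ i, Ltil i (T x) = (f x)⁻¹ * L i x := by
      intro i
      rw [hLtil, hT, expand, smulsum, smulsum, hSx, hL]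
      field_simp
      ring
    refine ⟨by rw [hftilT]; positivity, fun i => ?_⟩
    rw [hLtilT i]
    have := hΔ ▸ hx
    exact mul_nonneg (inv_nonneg.mpr hF.le) (this i)
  · rintro ⟨h1, h2⟩
    set t := ftil y with ht
    have ht0 : t ≠ 0 := ne_of_gt h1
    have hSy : (1 : ℝ) - ∑ j, a j * y j = a₀ * t := by
      rw [ht, hftil]; field_simp
    set x := t⁻¹ • y with hxdef
    have hfx : f x = t⁻¹ := by
      rw [hf, hxdef, smulsum]
      have hs : (∑ j, a j * y j) = 1 - a₀ * t := by linarith [hSy]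
      rw [hs]
      field_simp
      ring
    have hLx : ∀ i, L i x = t⁻¹ * Ltil i y := by
      intro i
      rw [hL, hxdef, smulsum, hLtil i, expand]
      have hs : (∑ j, a j * y j) = 1 - a₀ * t := by linarith [hSy]
      rw [hs]
      field_simp
      ring
    have hxΔ : x ∈ Δ := by
      rw [hΔ]
      intro i
      rw [hLx i]
      exact mul_nonneg (inv_nonneg.mpr h1.le) (h2 i)
    refine ⟨x, hxΔ, ?_⟩
    rw [hT, hfx, inv_inv, hxdef, smul_smul, mul_inv_cancel₀ ht0, one_smul]
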